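/- Let Z_3(n) = ∑_{p ⊢ n} Sym(p) be the sum of symmetry factors over all partitions of n. For every fixed integer K ≥ 0, one has lim_{n→∞} n^K · ( Z_3(n)/n! − S_{3;1;K}(n)/n! ) = 0. In other words, Z_3(n)/n! admits the all-orders asymptotic expansion 1 + ∑_{k=2}^{∞} (1/(n(n−1)⋯(n−k+1))) · ∑_{q ⊢ k, q with no part equal to 1} Sym(q) as n → ∞. -/

import Mathlib

open Finset Filter

/-- Symmetry factor of a partition `p` of `n`: `Sym(p) = ∏_{i=1}^n i^(p_i) · (p_i)!`,
where `p_i` is the number of parts of `p` equal to `i`. -/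
def symFactor {n : ℕ} (p : n.Partition) : ℕ :=
  ∏ i ∈ Finset.range (n + 1), i ^ p.parts.count i * (p.parts.count i).factorial

/-- `∑_{q ⊢ k, q with no part equal to 1} Sym(q)`. -/
def symSumNoOnes (k : ℕ) : ℕ :=
  ∑ q ∈ Finset.univ.filter (fun q : Nat.Partition k => 1 ∉ q.parts), symFactor q

/-- `Z_3(n) = ∑_{p ⊢ n} Sym(p)`. -/
def Z3 (n : ℕ) : ℕ := ∑ p : Nat.Partition n, symFactor p

/-- `S_{3;1;K}(n) = ∑_{k=0}^{K} (n−k)! · ∑_{q ⊢ k, no part 1} Sym(q)`. -/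
def S31 (K n : ℕ) : ℕ :=
  ∑ k ∈ Finset.range (K + 1), (n - k).factorial * symSumNoOnes k

section aux
open Multiset
lemma part_le {n : ℕ} (p : n.Partition) {i : ℕ} (hi : i ∈ p.parts) : i ≤ n := by
  rw [← p.parts_sum]; exact Multiset.le_sum_of_mem hi

lemma count_parts_eq_zero {n : ℕ} (p : n.Partition) {i : ℕ} (hi : n < i) :
    p.parts.count i = 0 :=
  Multiset.count_eq_zero.2 fun hm => absurd (part_le p hm) (by omega)

lemma symFactor_ext {n N : ℕ} (p : n.Partition) (h : n ≤ N) :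
    symFactor p = ∏ i ∈ Finset.range (N + 1),
      i ^ p.parts.count i * (p.parts.count i).factorial := by
  rw [symFactor]
  apply Finset.prod_subset (Finset.range_subset_range.2 (by omega))
  intro x _ hx
  rw [count_parts_eq_zero p (by simpa using hx)]
  simp

/-- add `n - k` ones to a partition of `k` to get a partition of `n` -/
def addOnes {n k : ℕ} (h : k ≤ n) (q : Nat.Partition k) : n.Partition where
  parts := Multiset.replicate (n - k) 1 + q.parts
  parts_pos := by
    intro i hi
    rcases Multiset.mem_add.1 hi with h' | h'
    · simp [Multiset.eq_of_mem_replicate h']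
    · exact q.parts_pos h'
  parts_sum := by
    rw [Multiset.sum_add, Multiset.sum_replicate, q.parts_sum]
    simp; omega

lemma symFactor_addOnes {n k : ℕ} (h : k ≤ n) (q : Nat.Partition k) (hq : 1 ∉ q.parts) :
    symFactor (addOnes h q) = (n - k).factorial * symFactor q := by
  have hcq : q.parts.count 1 = 0 := Multiset.count_eq_zero.2 hq
  rw [symFactor_ext q h, symFactor]
  have key : ∀ i ∈ Finset.range (n + 1),
      i ^ (addOnes h q).parts.count i * ((addOnes h q).parts.count i).factorial
      = (if i = 1 then (n - k).factorial else 1) *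
        (i ^ q.parts.count i * (q.parts.count i).factorial) := by
    intro i _
    have hc : (addOnes h q).parts.count i
        = (if i = 1 then n - k else 0) + q.parts.count i := by
      show ((Multiset.replicate (n - k) 1) + q.parts).count i = _
      rw [Multiset.count_add, Multiset.count_replicate]
      simp [eq_comm]
    by_cases hi : i = 1
    · subst hi; rw [hc, hcq]; simp
    · rw [hc]; simp [hi]
  rw [Finset.prod_congr rfl key, Finset.prod_mul_distrib, Finset.prod_ite_eq' (Finset.range (n+1)) 1
    (fun _ => (n - k).factorial)]
  rcases Nat.eq_zero_or_pos n with hn | hn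
  · subst hn; interval_cases k <;> simp
  · simp [Finset.mem_range.2 (by omega : 1 < n + 1)]

/-- remove ones -/
def stripOnes {n : ℕ} (p : n.Partition) : (k : ℕ) × Nat.Partition k :=
  ⟨(p.parts.filter (· ≠ 1)).sum,
   ⟨p.parts.filter (· ≠ 1), fun hi => p.parts_pos (Multiset.mem_filter.1 hi).1, rfl⟩⟩

lemma msum_le {s t : Multiset ℕ} (h : s ≤ t) : s.sum ≤ t.sum := by
  obtain ⟨u, rfl⟩ := Multiset.le_iff_exists_add.1 h; simp

lemma stripOnes_fst_le {n : ℕ} (p : n.Partition) : (stripOnes p).1 ≤ n := by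
  have h : (p.parts.filter (· ≠ 1)).sum ≤ p.parts.sum :=
    msum_le (Multiset.filter_le (· ≠ 1) p.parts)
  simpa [stripOnes, p.parts_sum] using h

lemma stripOnes_no_one {n : ℕ} (p : n.Partition) : 1 ∉ (stripOnes p).2.parts := by
  simp [stripOnes]

lemma partition_sigma_eq {a b : ℕ} (p : Nat.Partition a) (q : Nat.Partition b)
    (h : p.parts = q.parts) : (⟨a, p⟩ : (k : ℕ) × Nat.Partition k) = ⟨b, q⟩ := by
  have hab : a = b := by rw [← p.parts_sum, ← q.parts_sum, h]
  subst hab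
  simp [Nat.Partition.ext h]

lemma stripOnes_addOnes {n k : ℕ} (h : k ≤ n) (q : Nat.Partition k) (hq : 1 ∉ q.parts) :
    stripOnes (addOnes h q) = ⟨k, q⟩ := by
  have hparts : (Multiset.replicate (n - k) 1 + q.parts).filter (· ≠ 1) = q.parts := by
    rw [Multiset.filter_add]
    have h1 : (Multiset.replicate (n - k) 1).filter (· ≠ 1) = 0 := by
      rw [Multiset.filter_eq_nil]
      intro a ha; simp [Multiset.eq_of_mem_replicate ha]
    have h2 : q.parts.filter (· ≠ 1) = q.parts :=
      Multiset.filter_eq_self.2 fun a ha => fun he => hq (he ▸ ha)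
    rw [h1, h2, zero_add]
  exact partition_sigma_eq _ _ hparts

lemma addOnes_stripOnes {n : ℕ} (p : n.Partition) (h : (stripOnes p).1 ≤ n) :
    addOnes h (stripOnes p).2 = p := by
  apply Nat.Partition.ext
  show Multiset.replicate (n - (p.parts.filter (· ≠ 1)).sum) 1 + p.parts.filter (· ≠ 1) = p.parts
  have hsplit : p.parts.filter (· = 1) + p.parts.filter (· ≠ 1) = p.parts := by
    simpa using Multiset.filter_add_not (· = 1) p.parts
  have he : p.parts.filter (· = 1) = Multiset.replicate (p.parts.count 1) 1 :=
    Multiset.filter_eq' p.parts 1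
  have hsum : p.parts.count 1 * 1 + (p.parts.filter (· ≠ 1)).sum = n := by
    have hps := p.parts_sum
    rw [← hsplit, Multiset.sum_add, he, Multiset.sum_replicate] at hps
    simpa using hps
  have : n - (p.parts.filter (· ≠ 1)).sum = p.parts.count 1 := by omega
  rw [this, ← he, hsplit]

lemma Z3_eq (n : ℕ) :
    Z3 n = ∑ k ∈ Finset.range (n + 1), (n - k).factorial * symSumNoOnes k := by
  have hs : ∀ k : ℕ, (n - k).factorial * symSumNoOnes k
      = ∑ q ∈ Finset.univ.filter (fun q : Nat.Partition k => 1 ∉ q.parts),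
          (n - k).factorial * symFactor q := fun k => by
    rw [symSumNoOnes, Finset.mul_sum]
  rw [Finset.sum_congr rfl fun k _ => hs k, Finset.sum_sigma']
  rw [Z3]
  symm
  refine Finset.sum_bij'
    (fun (x : (k : ℕ) × Nat.Partition k) hx => addOnes
      (Finset.mem_range_succ_iff.1 (Finset.mem_sigma.1 hx).1) x.2)
    (fun p _ => stripOnes p) ?_ ?_ ?_ ?_ ?_
  · intro x hx; exact Finset.mem_univ _
  · intro p _
    rw [Finset.mem_sigma]
    exact ⟨Finset.mem_range_succ_iff.2 (stripOnes_fst_le p), by simp [stripOnes_no_one]⟩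
  · intro x hx
    obtain ⟨k, q⟩ := x
    have hq : 1 ∉ q.parts := by simpa using (Finset.mem_sigma.1 hx).2
    exact stripOnes_addOnes _ q hq
  · intro p _
    exact addOnes_stripOnes p (stripOnes_fst_le p)
  · intro x hx
    obtain ⟨k, q⟩ := x
    have hq : 1 ∉ q.parts := by simpa using (Finset.mem_sigma.1 hx).2
    exact (symFactor_addOnes (Finset.mem_range_succ_iff.1 (Finset.mem_sigma.1 hx).1) q hq).symm

lemma parts_toFinset_subset {k : ℕ} (q : Nat.Partition k) :
    q.parts.toFinset ⊆ Finset.range (k + 1) := fun i hi =>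
  Finset.mem_range_succ_iff.2 (part_le q (Multiset.mem_toFinset.1 hi))

lemma sum_count_mul {k : ℕ} (q : Nat.Partition k) :
    ∑ i ∈ Finset.range (k + 1), i * q.parts.count i = k := by
  have := Finset.sum_multiset_count_of_subset q.parts (Finset.range (k + 1))
    (parts_toFinset_subset q)
  rw [q.parts_sum] at this
  simpa [smul_eq_mul, mul_comm] using this.symm

lemma sum_count_eq_card {k : ℕ} (q : Nat.Partition k) :
    ∑ i ∈ Finset.range (k + 1), q.parts.count i = Multiset.card q.parts := by
  rw [← Multiset.toFinset_sum_count_eq q.parts]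
  exact (Finset.sum_subset (parts_toFinset_subset q) (fun x _ hx => by
    simpa [Multiset.count_eq_zero] using fun hm => hx (Multiset.mem_toFinset.2 hm))).symm

lemma symFactor_le {k : ℕ} (q : Nat.Partition k) :
    symFactor q ≤ 2 ^ k * (Multiset.card q.parts).factorial := by
  rw [symFactor, Finset.prod_mul_distrib]
  have h1 : ∏ i ∈ Finset.range (k + 1), i ^ q.parts.count i ≤ 2 ^ k := by
    calc ∏ i ∈ Finset.range (k + 1), i ^ q.parts.count i
        ≤ ∏ i ∈ Finset.range (k + 1), (2 ^ i) ^ q.parts.count i := by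
          apply Finset.prod_le_prod'
          intro i _
          exact Nat.pow_le_pow_left (Nat.lt_two_pow_self (n := i)).le _
      _ = 2 ^ ∑ i ∈ Finset.range (k + 1), i * q.parts.count i := by
          rw [← Finset.prod_pow_eq_pow_sum]
          exact Finset.prod_congr rfl fun i _ => by rw [pow_mul]
      _ = 2 ^ k := by rw [sum_count_mul q]
  have h2 : ∏ i ∈ Finset.range (k + 1), (q.parts.count i).factorial
      ≤ (Multiset.card q.parts).factorial := by
    rw [← sum_count_eq_card q]
    exact Nat.le_of_dvd (Nat.factorial_pos _)
      (Nat.prod_factorial_dvd_factorial_sum _ _)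
  exact Nat.mul_le_mul h1 h2

lemma two_mul_card_le {k : ℕ} (q : Nat.Partition k) (hq : 1 ∉ q.parts) :
    2 * Multiset.card q.parts ≤ k := by
  have h0 : ∀ x ∈ q.parts, 2 ≤ x := fun x hx => by
    have h1 := q.parts_pos hx
    have hx1 : x ≠ 1 := fun h => hq (h ▸ hx)
    omega
  have := Multiset.card_nsmul_le_sum h0
  rw [q.parts_sum] at this
  simpa [mul_comm] using this

lemma card_parts_le {k : ℕ} (q : Nat.Partition k) : Multiset.card q.parts ≤ k := by
  have h0 : ∀ x ∈ q.parts, 1 ≤ x := fun x hx => q.parts_pos hx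
  have := Multiset.card_nsmul_le_sum h0
  rw [q.parts_sum] at this
  simpa using this

/-- injection of partitions into `Sym (Fin (k+1)) k` by padding with zeros -/
def toSym {k : ℕ} (p : Nat.Partition k) : Sym (Fin (k + 1)) k :=
  ⟨p.parts.pmap (fun i h => (⟨i, h⟩ : Fin (k + 1)))
      (fun i hi => Nat.lt_succ_of_le (part_le p hi))
    + Multiset.replicate (k - Multiset.card p.parts) (0 : Fin (k + 1)),
   by
     rw [Multiset.card_add, Multiset.card_pmap, Multiset.card_replicate]
     have := card_parts_le p
     omega⟩

lemma toSym_recover {k : ℕ} (p : Nat.Partition k) :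
    (((toSym p : Sym (Fin (k + 1)) k) : Multiset (Fin (k + 1))).filter
      (fun x => x ≠ 0)).map Fin.val = p.parts := by
  show ((p.parts.pmap (fun i h => (⟨i, h⟩ : Fin (k + 1))) _
    + Multiset.replicate (k - Multiset.card p.parts) (0 : Fin (k + 1))).filter
      (fun x => x ≠ 0)).map Fin.val = p.parts
  rw [Multiset.filter_add]
  have h1 : (p.parts.pmap (fun i h => (⟨i, h⟩ : Fin (k + 1)))
      (fun i hi => Nat.lt_succ_of_le (part_le p hi))).filter (fun x => x ≠ 0)
      = p.parts.pmap (fun i h => (⟨i, h⟩ : Fin (k + 1)))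
      (fun i hi => Nat.lt_succ_of_le (part_le p hi)) := by
    rw [Multiset.filter_eq_self]
    intro a ha
    obtain ⟨i, hi, rfl⟩ := Multiset.mem_pmap.1 ha
    have := p.parts_pos hi
    simp only [ne_eq, Fin.ext_iff, Fin.val_zero]
    omega
  have h2 : (Multiset.replicate (k - Multiset.card p.parts) (0 : Fin (k + 1))).filter
      (fun x => x ≠ 0) = 0 := by
    rw [Multiset.filter_eq_nil]
    intro a ha
    simp [Multiset.eq_of_mem_replicate ha]
  rw [h1, h2, add_zero, Multiset.map_pmap]
  rw [Multiset.pmap_eq_map]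
  exact Multiset.map_id _

lemma toSym_injective {k : ℕ} : Function.Injective (toSym (k := k)) := by
  intro p q h
  apply Nat.Partition.ext
  rw [← toSym_recover p, ← toSym_recover q, h]

lemma card_partition_le (k : ℕ) : Fintype.card (Nat.Partition k) ≤ 4 ^ k := by
  have h1 := Fintype.card_le_of_injective _ (toSym_injective (k := k))
  have h2 : Fintype.card (Sym (Fin (k + 1)) k) = (2 * k).choose k := by
    rw [Sym.card_sym_eq_choose, Fintype.card_fin]
    congr 1
    omega
  have h3 : (2 * k).choose k ≤ 4 ^ k := by
    calc (2 * k).choose k ≤ ∑ i ∈ Finset.range (2 * k + 1), (2 * k).choose i :=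
          Finset.single_le_sum (fun i _ => Nat.zero_le _)
            (Finset.mem_range.2 (by omega))
      _ = 2 ^ (2 * k) := Nat.sum_range_choose (2 * k)
      _ = 4 ^ k := by rw [pow_mul]; norm_num
  omega

lemma symSumNoOnes_le (k : ℕ) :
    symSumNoOnes k ≤ 4 ^ k * (2 ^ k * (k / 2).factorial) := by
  rw [symSumNoOnes]
  calc ∑ q ∈ Finset.univ.filter (fun q : Nat.Partition k => 1 ∉ q.parts), symFactor q
      ≤ ∑ q ∈ Finset.univ.filter (fun q : Nat.Partition k => 1 ∉ q.parts),
          2 ^ k * (k / 2).factorial := by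
        apply Finset.sum_le_sum
        intro q hq
        have hq1 : 1 ∉ q.parts := (Finset.mem_filter.1 hq).2
        have h1 := symFactor_le q
        have h2 : Multiset.card q.parts ≤ k / 2 := by
          have := two_mul_card_le q hq1; omega
        exact h1.trans (Nat.mul_le_mul_left _ (Nat.factorial_le h2))
    _ ≤ (Finset.univ.filter (fun q : Nat.Partition k => 1 ∉ q.parts)).card
          * (2 ^ k * (k / 2).factorial) := by
        rw [Finset.sum_const, smul_eq_mul]
    _ ≤ 4 ^ k * (2 ^ k * (k / 2).factorial) := by
        apply Nat.mul_le_mul_right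
        calc (Finset.univ.filter (fun q : Nat.Partition k => 1 ∉ q.parts)).card
            ≤ (Finset.univ : Finset (Nat.Partition k)).card := Finset.card_le_card
              (Finset.filter_subset _ _)
          _ ≤ 4 ^ k := by rw [Finset.card_univ]; exact card_partition_le k


lemma nat_fact_bound {n k : ℕ} (hk : k ≤ n) :
    (n + 1 - k) ^ k * (n - k).factorial ≤ n.factorial := by
  rw [← Nat.factorial_mul_descFactorial hk, Nat.mul_comm ((n + 1 - k) ^ k)]
  exact Nat.mul_le_mul_left _ (Nat.pow_sub_le_descFactorial n k)

lemma real_fact_bound {n k : ℕ} (hn : 0 < n) (hk : k ≤ n) (hh : n ≤ 2 * (n + 1 - k)) :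
    ((n - k).factorial : ℝ) ≤ (n.factorial : ℝ) * (2 / n) ^ k := by
  have hn0 : (0 : ℝ) < n := by exact_mod_cast hn
  have h1 : ((n + 1 - k : ℕ) : ℝ) ^ k * ((n - k).factorial : ℝ) ≤ (n.factorial : ℝ) := by
    exact_mod_cast nat_fact_bound hk
  have h2 : (n : ℝ) / 2 ≤ ((n + 1 - k : ℕ) : ℝ) := by
    have h3 : (n : ℝ) ≤ 2 * ((n + 1 - k : ℕ) : ℝ) := by exact_mod_cast hh
    linarith
  have h3 : ((n : ℝ) / 2) ^ k * ((n - k).factorial : ℝ) ≤ (n.factorial : ℝ) :=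
    le_trans (mul_le_mul_of_nonneg_right
      (pow_le_pow_left₀ (by positivity) h2 k) (by positivity)) h1
  have hpow : (0 : ℝ) < ((n : ℝ) / 2) ^ k := by positivity
  have key : ((n - k).factorial : ℝ) ≤ (n.factorial : ℝ) / ((n : ℝ) / 2) ^ k := by
    rw [le_div_iff₀ hpow]
    linarith [h3]
  calc ((n - k).factorial : ℝ) ≤ (n.factorial : ℝ) / ((n : ℝ) / 2) ^ k := key
    _ = (n.factorial : ℝ) * (2 / n) ^ k := by
        rw [div_eq_mul_inv, ← inv_pow, inv_div]

lemma geom_tail_le {s : ℝ} (hs0 : 0 ≤ s) (hs : s ≤ 1 / 2) (a b : ℕ) :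
    ∑ k ∈ Finset.Ico a b, s ^ k ≤ 2 * s ^ a := by
  rw [Finset.sum_Ico_eq_sum_range]
  have h1 : ∑ i ∈ Finset.range (b - a), s ^ (a + i)
      = s ^ a * ∑ i ∈ Finset.range (b - a), s ^ i := by
    rw [Finset.mul_sum]
    exact Finset.sum_congr rfl fun i _ => pow_add s a i
  rw [h1]
  have h2 : ∑ i ∈ Finset.range (b - a), s ^ i ≤ 2 := by
    have hs1 : s < 1 := by linarith
    have hne : s ≠ 1 := ne_of_lt hs1
    rw [geom_sum_eq hne]
    have hd : (s ^ (b - a) - 1) / (s - 1) = (1 - s ^ (b - a)) / (1 - s) := by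
      rw [← neg_sub (1 : ℝ) (s ^ (b - a)), ← neg_sub (1 : ℝ) s, neg_div_neg_eq]
    rw [hd]
    have hpos : 0 < 1 - s := by linarith
    rw [div_le_iff₀ hpos]
    have : s ^ (b - a) ≥ 0 := by positivity
    nlinarith
  calc s ^ a * ∑ i ∈ Finset.range (b - a), s ^ i ≤ s ^ a * 2 :=
        mul_le_mul_of_nonneg_left h2 (by positivity)
    _ = 2 * s ^ a := by ring

lemma main_bound (A : ℕ → ℕ) (hA : ∀ k, A k ≤ 8 ^ k * (k / 2).factorial)
    (K : ℕ) {n : ℕ} (hn : 4 * K + 512 ≤ n) :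
    (n : ℝ) ^ K * ((∑ k ∈ Finset.Ico (K + 1) (n + 1),
        (n - k).factorial * A k : ℕ) : ℝ) / (n.factorial : ℝ)
      ≤ ((∑ k ∈ Finset.Ico (K + 1) (2 * K + 2), (A k : ℝ)) * 2 ^ (K + 1)
          + 2 * 128 ^ (K + 1)) / n := by
  have hn0 : 0 < n := by omega
  have hnR : (0 : ℝ) < n := by exact_mod_cast hn0
  have hfac : (0 : ℝ) < n.factorial := by exact_mod_cast n.factorial_pos
  set C₁ : ℝ := ∑ k ∈ Finset.Ico (K + 1) (2 * K + 2), (A k : ℝ) with hC₁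
  -- split the sum
  have hsplit : (∑ k ∈ Finset.Ico (K + 1) (n + 1), ((n - k).factorial * A k : ℕ) : ℝ)
      = (∑ k ∈ Finset.Ico (K + 1) (2 * K + 2), ((n - k).factorial * A k : ℕ) : ℝ)
        + (∑ k ∈ Finset.Ico (2 * K + 2) (n + 1), ((n - k).factorial * A k : ℕ) : ℝ) := by
    exact_mod_cast congrArg (Nat.cast : ℕ → ℝ)
      (Finset.sum_Ico_consecutive (fun k => (n - k).factorial * A k)
        (by omega : K + 1 ≤ 2 * K + 2) (by omega : 2 * K + 2 ≤ n + 1)).symm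
  -- part 1
  have hpart1 : (∑ k ∈ Finset.Ico (K + 1) (2 * K + 2), ((n - k).factorial * A k : ℕ) : ℝ)
      ≤ C₁ * (2 / n) ^ (K + 1) * n.factorial := by
    push_cast
    rw [hC₁, Finset.sum_mul, Finset.sum_mul]
    apply Finset.sum_le_sum
    intro k hk
    obtain ⟨hk1, hk2⟩ := Finset.mem_Ico.1 hk
    have hkn : k ≤ n := by omega
    have hfb : ((n - k).factorial : ℝ) ≤ (n.factorial : ℝ) * (2 / n) ^ k :=
      real_fact_bound hn0 hkn (by omega)
    have hmono : ((2 : ℝ) / n) ^ k ≤ (2 / n) ^ (K + 1) := by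
      apply pow_le_pow_of_le_one (by positivity) _ hk1
      rw [div_le_one hnR]
      have : (512 : ℝ) ≤ n := by exact_mod_cast (by omega : 512 ≤ n)
      linarith
    calc ((n - k).factorial : ℝ) * (A k : ℝ)
        ≤ ((n.factorial : ℝ) * (2 / n) ^ k) * (A k : ℝ) :=
          mul_le_mul_of_nonneg_right hfb (by positivity)
      _ ≤ ((n.factorial : ℝ) * (2 / n) ^ (K + 1)) * (A k : ℝ) := by
          apply mul_le_mul_of_nonneg_right _ (by positivity)
          exact mul_le_mul_of_nonneg_left hmono (by positivity)
      _ = (A k : ℝ) * (2 / n) ^ (K + 1) * n.factorial := by ring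
  -- part 2
  set s : ℝ := Real.sqrt (128 / n) with hs
  have hsnn : 0 ≤ s := Real.sqrt_nonneg _
  have hs2 : s ^ 2 = 128 / n := Real.sq_sqrt (by positivity)
  have hshalf : s ≤ 1 / 2 := by
    rw [hs]
    rw [show (1 : ℝ) / 2 = Real.sqrt ((1 / 2) ^ 2) by
      rw [Real.sqrt_sq (by norm_num)]]
    apply Real.sqrt_le_sqrt
    rw [div_le_iff₀ hnR]
    have : (512 : ℝ) ≤ n := by exact_mod_cast (by omega : 512 ≤ n)
    nlinarith
  have hterm2 : ∀ k ∈ Finset.Ico (2 * K + 2) (n + 1),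
      (((n - k).factorial * A k : ℕ) : ℝ) ≤ (n.factorial : ℝ) * s ^ k := by
    intro k hk
    obtain ⟨hk1, hk2⟩ := Finset.mem_Ico.1 hk
    have hkn : k ≤ n := by omega
    set j : ℕ := k - k / 2 with hj
    have hjk : k ≤ 2 * j := by omega
    have hjn : j ≤ n := by omega
    -- nat step : (n-k)! * A k ≤ 8^k * (n-j)!
    have hnat : (n - k).factorial * A k ≤ 8 ^ k * (n - j).factorial := by
      calc (n - k).factorial * A k ≤ (n - k).factorial * (8 ^ k * (k / 2).factorial) :=
            Nat.mul_le_mul_left _ (hA k)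
        _ = 8 ^ k * ((k / 2).factorial * (n - k).factorial) := by ring
        _ ≤ 8 ^ k * (n - j).factorial := by
            apply Nat.mul_le_mul_left
            have hd : (k / 2).factorial * (n - k).factorial ∣ (k / 2 + (n - k)).factorial :=
              Nat.factorial_mul_factorial_dvd_factorial_add _ _
            have he : k / 2 + (n - k) = n - j := by omega
            rw [he] at hd
            exact Nat.le_of_dvd (Nat.factorial_pos _) hd
    have hfb : ((n - j).factorial : ℝ) ≤ (n.factorial : ℝ) * (2 / n) ^ j :=
      real_fact_bound hn0 hjn (by omega)
    have hcast : (((n - k).factorial * A k : ℕ) : ℝ) ≤ (8 : ℝ) ^ k * ((n - j).factorial : ℝ) := by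
      exact_mod_cast hnat
    have h8 : (8 : ℝ) ^ k ≤ 64 ^ j := by
      calc (8 : ℝ) ^ k ≤ 8 ^ (2 * j) := by
            apply pow_le_pow_right₀ (by norm_num) hjk
        _ = 64 ^ j := by rw [pow_mul]; norm_num
    have hstep : (8 : ℝ) ^ k * ((n.factorial : ℝ) * (2 / n) ^ j)
        ≤ (n.factorial : ℝ) * (128 / n) ^ j := by
      calc (8 : ℝ) ^ k * ((n.factorial : ℝ) * (2 / n) ^ j)
          ≤ (64 : ℝ) ^ j * ((n.factorial : ℝ) * (2 / n) ^ j) :=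
            mul_le_mul_of_nonneg_right h8 (by positivity)
        _ = (n.factorial : ℝ) * (64 * (2 / n)) ^ j := by rw [mul_pow]; ring
        _ = (n.factorial : ℝ) * (128 / n) ^ j := by
            congr 2
            field_simp
            norm_num
    have hsk : ((128 : ℝ) / n) ^ j ≤ s ^ k := by
      have h1 : ((128 : ℝ) / n) ^ j = s ^ (2 * j) := by
        rw [pow_mul, hs2]
      rw [h1]
      exact pow_le_pow_of_le_one hsnn (by linarith) hjk
    calc (((n - k).factorial * A k : ℕ) : ℝ)
        ≤ (8 : ℝ) ^ k * ((n - j).factorial : ℝ) := hcast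
      _ ≤ (8 : ℝ) ^ k * ((n.factorial : ℝ) * (2 / n) ^ j) :=
          mul_le_mul_of_nonneg_left hfb (by positivity)
      _ ≤ (n.factorial : ℝ) * (128 / n) ^ j := hstep
      _ ≤ (n.factorial : ℝ) * s ^ k := mul_le_mul_of_nonneg_left hsk (by positivity)
  have hpart2 : (∑ k ∈ Finset.Ico (2 * K + 2) (n + 1), ((n - k).factorial * A k : ℕ) : ℝ)
      ≤ (n.factorial : ℝ) * (2 * (128 / n) ^ (K + 1)) := by
    push_cast
    calc ∑ k ∈ Finset.Ico (2 * K + 2) (n + 1), ((n - k).factorial : ℝ) * (A k : ℝ)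
        ≤ ∑ k ∈ Finset.Ico (2 * K + 2) (n + 1), (n.factorial : ℝ) * s ^ k := by
          apply Finset.sum_le_sum
          intro k hk
          have := hterm2 k hk
          push_cast at this
          exact this
      _ = (n.factorial : ℝ) * ∑ k ∈ Finset.Ico (2 * K + 2) (n + 1), s ^ k := by
          rw [Finset.mul_sum]
      _ ≤ (n.factorial : ℝ) * (2 * s ^ (2 * K + 2)) := by
          apply mul_le_mul_of_nonneg_left (geom_tail_le hsnn hshalf _ _) (by positivity)
      _ = (n.factorial : ℝ) * (2 * (128 / n) ^ (K + 1)) := by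
          congr 2
          rw [show 2 * K + 2 = 2 * (K + 1) by ring, pow_mul, hs2]
  -- combine
  have hsum : (∑ k ∈ Finset.Ico (K + 1) (n + 1), ((n - k).factorial * A k : ℕ) : ℝ)
      ≤ (n.factorial : ℝ) * (C₁ * (2 / n) ^ (K + 1) + 2 * (128 / n) ^ (K + 1)) := by
    rw [hsplit]
    have := add_le_add hpart1 hpart2
    calc _ ≤ C₁ * (2 / n) ^ (K + 1) * n.factorial
        + (n.factorial : ℝ) * (2 * (128 / n) ^ (K + 1)) := this
      _ = (n.factorial : ℝ) * (C₁ * (2 / n) ^ (K + 1) + 2 * (128 / n) ^ (K + 1)) := by ring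
  have hSc : ((∑ k ∈ Finset.Ico (K + 1) (n + 1), (n - k).factorial * A k : ℕ) : ℝ)
      = ∑ k ∈ Finset.Ico (K + 1) (n + 1), (((n - k).factorial * A k : ℕ) : ℝ) := by
    push_cast; rfl
  rw [hSc, div_le_div_iff₀ hfac hnR]
  have hnne : (n : ℝ) ≠ 0 := ne_of_gt hnR
  calc (n : ℝ) ^ K * (∑ k ∈ Finset.Ico (K + 1) (n + 1), (((n - k).factorial * A k : ℕ) : ℝ)) * n
      ≤ (n : ℝ) ^ K * ((n.factorial : ℝ) * (C₁ * (2 / n) ^ (K + 1) + 2 * (128 / n) ^ (K + 1))) * n := by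
        apply mul_le_mul_of_nonneg_right _ (le_of_lt hnR)
        exact mul_le_mul_of_nonneg_left hsum (by positivity)
    _ = (C₁ * 2 ^ (K + 1) + 2 * 128 ^ (K + 1)) * n.factorial := by
        rw [div_pow, div_pow]
        field_simp
        ring

lemma symSumNoOnes_le' (k : ℕ) : symSumNoOnes k ≤ 8 ^ k * (k / 2).factorial := by
  have h := symSumNoOnes_le k
  calc symSumNoOnes k ≤ 4 ^ k * (2 ^ k * (k / 2).factorial) := h
    _ = 8 ^ k * (k / 2).factorial := by rw [← Nat.mul_assoc, ← Nat.mul_pow]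

lemma Z3_split (K n : ℕ) (h : K ≤ n) :
    Z3 n = S31 K n + ∑ k ∈ Finset.Ico (K + 1) (n + 1),
      (n - k).factorial * symSumNoOnes k := by
  rw [Z3_eq, S31]
  simp only [Finset.range_eq_Ico]
  exact (Finset.sum_Ico_consecutive (fun k => (n - k).factorial * symSumNoOnes k)
      (Nat.zero_le (K + 1)) (by omega : K + 1 ≤ n + 1)).symm

end aux

/-- For every fixed `K ≥ 0`,
`lim_{n→∞} n^K · (Z_3(n)/n! − S_{3;1;K}(n)/n! ) = 0`. -/
theorem Z3_asymptotic_expansion (K : ℕ) :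
    Tendsto (fun n : ℕ =>
      (n : ℝ) ^ K * ((Z3 n : ℝ) / (n.factorial : ℝ) - (S31 K n : ℝ) / (n.factorial : ℝ)))
      atTop (nhds 0) := by
  set D : ℝ := (∑ k ∈ Finset.Ico (K + 1) (2 * K + 2), (symSumNoOnes k : ℝ)) * 2 ^ (K + 1)
      + 2 * 128 ^ (K + 1) with hD
  have hkey : ∀ n : ℕ, 4 * K + 512 ≤ n →
      (n : ℝ) ^ K * ((Z3 n : ℝ) / (n.factorial : ℝ) - (S31 K n : ℝ) / (n.factorial : ℝ))
      = (n : ℝ) ^ K * ((∑ k ∈ Finset.Ico (K + 1) (n + 1),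
          (n - k).factorial * symSumNoOnes k : ℕ) : ℝ) / (n.factorial : ℝ) := by
    intro n hn
    have hZ := Z3_split K n (by omega)
    have hfac : (0 : ℝ) < n.factorial := by exact_mod_cast n.factorial_pos
    rw [div_sub_div_same, mul_div_assoc]
    congr 2
    have : (Z3 n : ℝ) = (S31 K n : ℝ) + ((∑ k ∈ Finset.Ico (K + 1) (n + 1),
        (n - k).factorial * symSumNoOnes k : ℕ) : ℝ) := by exact_mod_cast hZ
    linarith
  apply squeeze_zero' (g := fun n : ℕ => D / n)
  · filter_upwards [eventually_ge_atTop (4 * K + 512)] with n hn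
    rw [hkey n hn]
    positivity
  · filter_upwards [eventually_ge_atTop (4 * K + 512)] with n hn
    rw [hkey n hn]
    exact main_bound symSumNoOnes symSumNoOnes_le' K hn
  · exact tendsto_const_div_atTop_nhds_zero_nat D
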